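/- (The paper's error-estimate theorem, variable time steps.) Let f : ℝⁿ → ℝⁿ be Lipschitz continuous with constant L_f ≥ 0, let t_0 < t_1 < ⋯ < t_m be time instances with stepsizes Δ_j := t_{j+1} − t_j > 0, and let u : [t_0, t_m] → ℝⁿ be a solution of the autonomous ODE x' = f(x) on [t_0, t_m]. Define predicted states by p_0 := u(t_0) and p_{j+1} := p_j + Δ_j · N_j for j = 0, …, m−1, where each N_j ∈ ℝⁿ is an approximate increment. Suppose that for each j there is a solution w_j : [0, Δ_j] → ℝⁿ of the same ODE with w_j(0) = p_j, and that ‖N_j − (w_j(Δ_j) − p_j)/Δ_j‖₂ ≤ E for some fixed E ≥ 0. Then for every j with 1 ≤ j ≤ m, ‖p_j − u(t_j)‖₂ ≤ E · Σ_{s=0}^{j−1} Δ_s · exp(L_f · (t_j − t_{s+1})). -/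

import Mathlib

/-- error-estimate theorem, variable time steps: with time instances
`t 0 < t 1 < ⋯ < t m`, true solution `u` on `[t 0, t m]`, predicted states
`p 0 = u (t 0)`, `p (j+1) = p j + Δ_j • N j`, and learned increments `N j` within `E` of
the exact time-averaged increments at the predicted states, one has
`‖p j - u (t j)‖ ≤ E ∑_{s<j} Δ_s exp (L_f (t j - t (s+1)))` for `1 ≤ j ≤ m`. -/
theorem stmt_3 {n : ℕ} (f : EuclideanSpace ℝ (Fin n) → EuclideanSpace ℝ (Fin n))
    (Lf E : ℝ) (hLf : 0 ≤ Lf) (hE : 0 ≤ E)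
    (hf : ∀ x y, ‖f x - f y‖ ≤ Lf * ‖x - y‖)
    (m : ℕ) (t : ℕ → ℝ) (ht : ∀ j < m, t j < t (j + 1))
    (u : ℝ → EuclideanSpace ℝ (Fin n))
    (hu : ∀ s ∈ Set.Icc (t 0) (t m), HasDerivAt u (f (u s)) s)
    (N : ℕ → EuclideanSpace ℝ (Fin n)) (p : ℕ → EuclideanSpace ℝ (Fin n))
    (hp0 : p 0 = u (t 0))
    (hpstep : ∀ j < m, p (j + 1) = p j + (t (j + 1) - t j) • N j)
    (w : ℕ → ℝ → EuclideanSpace ℝ (Fin n))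
    (hw : ∀ j < m, ∀ s ∈ Set.Icc (0 : ℝ) (t (j + 1) - t j),
      HasDerivAt (w j) (f (w j s)) s)
    (hw0 : ∀ j < m, w j 0 = p j)
    (hN : ∀ j < m,
      ‖N j - (t (j + 1) - t j)⁻¹ • (w j (t (j + 1) - t j) - p j)‖ ≤ E) :
    ∀ j, 1 ≤ j → j ≤ m →
      ‖p j - u (t j)‖ ≤
        E * ∑ s ∈ Finset.range j,
          (t (s + 1) - t s) * Real.exp (Lf * (t j - t (s + 1))) := by
  -- Lipschitz structure
  have hlip : LipschitzWith ⟨Lf, hLf⟩ f := by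
    apply LipschitzWith.of_dist_le_mul
    intro x y
    rw [dist_eq_norm, dist_eq_norm]; exact hf x y
  -- monotonicity of t
  have tmono : ∀ a b, a ≤ b → b ≤ m → t a ≤ t b := by
    intro a b hab
    induction hab with
    | refl => intro _; exact le_refl _
    | @step c hc ih =>
      intro hcm
      exact (ih (by omega)).trans (ht c (by omega)).le
  -- key single-step estimate
  have key : ∀ j < m, ‖p (j + 1) - u (t (j + 1))‖ ≤
      (t (j + 1) - t j) * E + ‖p j - u (t j)‖ * Real.exp (Lf * (t (j + 1) - t j)) := by
    intro j hj
    set Δ := t (j + 1) - t j with hΔdef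
    have hΔ : 0 < Δ := sub_pos.2 (ht j hj)
    -- compare w j with g s = u (t j + s) on [0, Δ]
    set g : ℝ → EuclideanSpace ℝ (Fin n) := fun s => u (t j + s) with hg
    have hmem : ∀ s ∈ Set.Icc (0:ℝ) Δ, t j + s ∈ Set.Icc (t 0) (t m) := by
      intro s hs
      constructor
      · have := tmono 0 j (Nat.zero_le _) hj.le
        linarith [hs.1]
      · have := tmono (j+1) m hj (le_refl m)
        have : t (j+1) ≤ t m := tmono (j+1) m hj (le_refl m)
        have h2 : t j + s ≤ t (j+1) := by
          have := hs.2
          simp only [hΔdef] at this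
          linarith
        linarith
    have hgderiv : ∀ s ∈ Set.Icc (0:ℝ) Δ, HasDerivAt g (f (g s)) s := by
      intro s hs
      exact HasDerivAt.comp_const_add (t j) s (hu _ (hmem s hs))
    have hdist := dist_le_of_trajectories_ODE (v := fun _ x => f x) (K := ⟨Lf, hLf⟩)
      (a := 0) (b := Δ) (δ := ‖p j - u (t j)‖)
      (fun _ => hlip)
      (fun s hs => ((hw j hj s hs).continuousAt).continuousWithinAt)
      (fun s hs => ((hw j hj s (Set.mem_Icc.2 ⟨hs.1, hs.2.le⟩)).hasDerivWithinAt))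
      (fun s hs => ((hgderiv s hs).continuousAt).continuousWithinAt)
      (fun s hs => ((hgderiv s (Set.mem_Icc.2 ⟨hs.1, hs.2.le⟩)).hasDerivWithinAt))
      (by simp [hg, dist_eq_norm, hw0 j hj])
      Δ (Set.mem_Icc.2 ⟨hΔ.le, le_refl _⟩)
    have hwu : ‖w j Δ - u (t (j+1))‖ ≤ ‖p j - u (t j)‖ * Real.exp (Lf * Δ) := by
      have : g Δ = u (t (j+1)) := by simp [hg, hΔdef]
      rw [← this]
      simp [dist_eq_norm] at hdist
      exact hdist
    -- split p(j+1) - u(t(j+1))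
    have hsplit : p (j + 1) - u (t (j + 1)) =
        Δ • (N j - Δ⁻¹ • (w j Δ - p j)) + (w j Δ - u (t (j + 1))) := by
      rw [hpstep j hj, smul_sub, smul_smul, mul_inv_cancel₀ hΔ.ne', one_smul]
      abel
    calc ‖p (j + 1) - u (t (j + 1))‖
        ≤ ‖Δ • (N j - Δ⁻¹ • (w j Δ - p j))‖ + ‖w j Δ - u (t (j + 1))‖ := by
          rw [hsplit]; exact norm_add_le _ _
      _ ≤ Δ * E + ‖p j - u (t j)‖ * Real.exp (Lf * Δ) := by
          refine add_le_add ?_ hwu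
          rw [norm_smul, Real.norm_eq_abs, abs_of_pos hΔ]
          exact mul_le_mul_of_nonneg_left (hN j hj) hΔ.le
  -- induction
  intro j hj1 hjm
  clear hj1
  induction j with
  | zero => simp [hp0]
  | succ j ih =>
    have hjm' : j < m := hjm
    have step := key j hjm'
    have ihj : ‖p j - u (t j)‖ ≤
        E * ∑ s ∈ Finset.range j, (t (s + 1) - t s) * Real.exp (Lf * (t j - t (s + 1))) := by
      rcases Nat.eq_zero_or_pos j with h | h
      · subst h; simp [hp0]
      · exact ih (by omega)
    calc ‖p (j+1) - u (t (j+1))‖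
        ≤ (t (j + 1) - t j) * E + ‖p j - u (t j)‖ * Real.exp (Lf * (t (j + 1) - t j)) := step
      _ ≤ (t (j + 1) - t j) * E +
          (E * ∑ s ∈ Finset.range j, (t (s + 1) - t s) * Real.exp (Lf * (t j - t (s + 1)))) *
            Real.exp (Lf * (t (j + 1) - t j)) := by
          have hexp : (0:ℝ) ≤ Real.exp (Lf * (t (j + 1) - t j)) := (Real.exp_pos _).le
          exact add_le_add_right (mul_le_mul_of_nonneg_right ihj hexp) _
      _ = E * ∑ s ∈ Finset.range (j+1),
            (t (s + 1) - t s) * Real.exp (Lf * (t (j+1) - t (s + 1))) := by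
          have hterm : ∀ s : ℕ, Real.exp (Lf * (t j - t (s+1))) * Real.exp (Lf * (t (j+1) - t j))
              = Real.exp (Lf * (t (j+1) - t (s+1))) := by
            intro s; rw [← Real.exp_add]; ring_nf
          rw [Finset.sum_range_succ, mul_add, sub_self, mul_zero, Real.exp_zero, mul_one,
            add_comm, mul_comm E (t (j+1) - t j)]
          congr 1
          rw [mul_assoc, Finset.sum_mul]
          congr 1
          apply Finset.sum_congr rfl
          intro s _
          rw [mul_assoc, hterm s]
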